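/- (Concentration of the rescaled kernel, transition to the intermediate regime.) Extend V evenly to ℝ∖{0} by V(s) = (1/π)·|s|·coth(π|s|) − (1/π²)·log(2·sinh(π|s|)). Then for every bounded continuous function f : ℝ → ℝ, the limit as a → +∞ of ∫_ℝ a·V(a·x)·f(x) dx equals (1/(3π))·f(0); that is, the rescaled kernels a·V(a·) converge to (∫_{−∞}^∞ V)·δ₀ = (1/(3π))·δ₀. -/

import Mathlib

open Real Filter MeasureTheory
open Set

/-- The even extension to `ℝ∖{0}` of the wall-interaction energy
`V(s) = (1/π)·s·coth(πs) − (1/π²)·log(2·sinh(πs))` (`s > 0`). -/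
noncomputable def Vext (s : ℝ) : ℝ :=
  (1 / Real.pi) * |s| * (Real.cosh (Real.pi * |s|) / Real.sinh (Real.pi * |s|))
    - (1 / Real.pi ^ 2) * Real.log (2 * Real.sinh (Real.pi * |s|))

noncomputable def Gp (n : ℕ) (s : ℝ) : ℝ :=
  (2 / Real.pi) * (s * Real.exp (-(2 * Real.pi * (n + 1)) * s))
    + (1 / (Real.pi ^ 2 * (n + 1))) * Real.exp (-(2 * Real.pi * (n + 1)) * s)

lemma Gp_nonneg (n : ℕ) {s : ℝ} (hs : 0 ≤ s) : 0 ≤ Gp n s := by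
  have := Real.pi_pos
  have h1 : (0:ℝ) < (n:ℝ) + 1 := by positivity
  unfold Gp
  positivity

lemma hasSum_Gp {s : ℝ} (hs : 0 < s) : HasSum (fun n => Gp n s) (Vext s) := by
  have hπ := Real.pi_pos
  set u : ℝ := Real.exp (-(2 * Real.pi * s)) with hu
  have hu0 : 0 < u := Real.exp_pos _
  have hu1 : u < 1 := by
    rw [hu, Real.exp_lt_one_iff]
    nlinarith
  have hupow : ∀ n : ℕ, Real.exp (-(2 * Real.pi * (n + 1)) * s) = u ^ (n + 1) := by
    intro n
    rw [hu, ← Real.exp_nat_mul]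
    congr 1
    push_cast
    ring
  have hA : HasSum (fun n : ℕ => (2 * s / Real.pi) * (u * u ^ n))
      ((2 * s / Real.pi) * (u * (1 - u)⁻¹)) :=
    ((hasSum_geometric_of_lt_one hu0.le hu1).mul_left u).mul_left _
  have hB : HasSum (fun n : ℕ => (1 / Real.pi ^ 2) * (u ^ (n + 1) / (n + 1)))
      ((1 / Real.pi ^ 2) * (-Real.log (1 - u))) :=
    (Real.hasSum_pow_div_log_of_abs_lt_one (by rw [abs_of_pos hu0]; exact hu1)).mul_left _
  have hAB := hA.add hB
  have heq : (fun n : ℕ => (2 * s / Real.pi) * (u * u ^ n)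
      + (1 / Real.pi ^ 2) * (u ^ (n + 1) / (n + 1))) = fun n => Gp n s := by
    funext n
    rw [Gp, hupow n]
    have hn1 : ((n:ℝ) + 1) ≠ 0 := by positivity
    field_simp
    ring
  rw [heq] at hAB
  convert hAB using 1
  -- Vext s = (2 s/π) (u (1-u)⁻¹) + (1/π²)(- log (1-u))
  have habs : |s| = s := abs_of_pos hs
  have he : Real.exp (Real.pi * s) > 0 := Real.exp_pos _
  have h1u : 0 < 1 - u := by linarith
  have hcosh : Real.cosh (Real.pi * s) = (Real.exp (Real.pi * s) + Real.exp (-(Real.pi * s))) / 2 :=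
    Real.cosh_eq _
  have hsinh : Real.sinh (Real.pi * s) = (Real.exp (Real.pi * s) - Real.exp (-(Real.pi * s))) / 2 :=
    Real.sinh_eq _
  have hexpneg : Real.exp (-(Real.pi * s)) = (Real.exp (Real.pi * s))⁻¹ := by
    rw [Real.exp_neg]
  have huexp : u = ((Real.exp (Real.pi * s))⁻¹) ^ 2 := by
    rw [hu, ← Real.exp_neg, ← Real.exp_nat_mul]
    · congr 1; push_cast; ring
  set e : ℝ := Real.exp (Real.pi * s) with hedef
  have heu : e * u = e⁻¹ := by
    rw [huexp]; field_simp
  have hsinh2 : 2 * Real.sinh (Real.pi * s) = e * (1 - u) := by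
    rw [hsinh, hexpneg, mul_sub, heu]
    ring
  have hlog : Real.log (2 * Real.sinh (Real.pi * s)) = Real.pi * s + Real.log (1 - u) := by
    rw [hsinh2, Real.log_mul he.ne' h1u.ne', Real.log_exp]
  have hratio : Real.cosh (Real.pi * s) / Real.sinh (Real.pi * s) = (1 + u) / (1 - u) := by
    have hsinh3 : Real.sinh (Real.pi * s) = e * (1 - u) / 2 := by linarith [hsinh2]
    have hcosh2 : Real.cosh (Real.pi * s) = e * (1 + u) / 2 := by
      rw [hcosh, hexpneg, ← heu]
      ring
    rw [hsinh3, hcosh2]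
    rw [div_div_div_eq]
    field_simp
  rw [Vext, habs, hlog, hratio]
  field_simp
  ring



lemma integral_exp_Ioi {c : ℝ} (hc : 0 < c) :
    ∫ s in Ioi (0:ℝ), Real.exp (-c * s) = 1 / c := by
  have h := integral_rpow_mul_exp_neg_mul_Ioi (zero_lt_one) hc
  simp only [sub_self, Real.rpow_zero, one_mul, Real.rpow_one, Real.Gamma_one, mul_one] at h
  simpa [neg_mul] using h

lemma Gamma_two' : Real.Gamma 2 = 1 := by
  rw [show (2:ℝ) = 1 + 1 by norm_num, Real.Gamma_add_one one_ne_zero, Real.Gamma_one, mul_one]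

lemma integral_id_mul_exp_Ioi {c : ℝ} (hc : 0 < c) :
    ∫ s in Ioi (0:ℝ), s * Real.exp (-c * s) = 1 / c ^ 2 := by
  have h := integral_rpow_mul_exp_neg_mul_Ioi (by norm_num : (0:ℝ) < 2) hc
  rw [show (2:ℝ) - 1 = 1 by norm_num] at h
  simp only [Real.rpow_one, Gamma_two', mul_one] at h
  rw [show ((1:ℝ)/c) ^ (2:ℝ) = (1/c)^(2:ℕ) by
    rw [← Real.rpow_natCast (1/c) 2]; norm_num] at h
  rw [show (1/c)^(2:ℕ) = 1/c^2 by rw [div_pow]; norm_num] at h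
  simpa [neg_mul] using h

lemma integrableOn_exp_Ioi {c : ℝ} (hc : 0 < c) :
    IntegrableOn (fun s => Real.exp (-c * s)) (Ioi (0:ℝ)) :=
  exp_neg_integrableOn_Ioi 0 hc

lemma integrableOn_id_mul_exp_Ioi {c : ℝ} (hc : 0 < c) :
    IntegrableOn (fun s => s * Real.exp (-c * s)) (Ioi (0:ℝ)) := by
  have h := integrableOn_rpow_mul_exp_neg_mul_rpow (by norm_num : (-1:ℝ) < 1) (by norm_num : (0:ℝ) < 1) hc
  simpa [Real.rpow_one] using h

lemma c_pos (n : ℕ) : 0 < 2 * Real.pi * ((n:ℝ) + 1) := by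
  have := Real.pi_pos; positivity

lemma integrableOn_Gp (n : ℕ) : IntegrableOn (Gp n) (Ioi (0:ℝ)) := by
  exact ((integrableOn_id_mul_exp_Ioi (c_pos n)).const_mul _).add
    ((integrableOn_exp_Ioi (c_pos n)).const_mul _)

lemma integral_Gp (n : ℕ) :
    ∫ s in Ioi (0:ℝ), Gp n s = 1 / (Real.pi ^ 3 * ((n:ℝ) + 1) ^ 2) := by
  have hπ := Real.pi_pos
  have hn : (0:ℝ) < (n:ℝ) + 1 := by positivity
  unfold Gp
  rw [integral_add ((integrableOn_id_mul_exp_Ioi (c_pos n)).const_mul _)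
    ((integrableOn_exp_Ioi (c_pos n)).const_mul _), MeasureTheory.integral_const_mul, MeasureTheory.integral_const_mul,
    integral_id_mul_exp_Ioi (c_pos n), integral_exp_Ioi (c_pos n)]
  field_simp
  ring

lemma measurable_Gp (n : ℕ) : Measurable (Gp n) := by
  unfold Gp; fun_prop

lemma hasSum_coeff :
    HasSum (fun n : ℕ => 1 / (Real.pi ^ 3 * ((n:ℝ) + 1) ^ 2)) (1 / (6 * Real.pi)) := by
  have hπ := Real.pi_pos
  have h0 : HasSum (fun n : ℕ => (1:ℝ) / ((n:ℝ) + 1) ^ 2) (Real.pi ^ 2 / 6) := by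
    have h1 := (hasSum_nat_add_iff' (f := fun n : ℕ => (1:ℝ) / (n:ℝ) ^ 2) 1).mpr hasSum_zeta_two
    simp only [Finset.range_one, Finset.sum_singleton, Nat.cast_zero] at h1
    norm_num at h1
    simpa [one_div] using h1
  have h2 := h0.mul_left (1 / Real.pi ^ 3)
  have e1 : (fun n : ℕ => 1 / Real.pi ^ 3 * ((1:ℝ) / ((n:ℝ) + 1) ^ 2))
      = fun n : ℕ => 1 / (Real.pi ^ 3 * ((n:ℝ) + 1) ^ 2) := by
    funext n
    have hn : ((n:ℝ) + 1) ≠ 0 := by positivity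
    field_simp
  have e2 : 1 / Real.pi ^ 3 * (Real.pi ^ 2 / 6) = 1 / (6 * Real.pi) := by
    field_simp
  rw [e1, e2] at h2
  exact h2

lemma measurable_Vext : Measurable Vext := by
  unfold Vext
  have h1 : Measurable fun s : ℝ => |s| := continuous_abs.measurable
  exact (((measurable_const.mul h1).mul
    ((Real.continuous_cosh.measurable.comp (h1.const_mul _)).div
      (Real.continuous_sinh.measurable.comp (h1.const_mul _)))).sub
    (measurable_const.mul (Real.measurable_log.comp
      ((Real.continuous_sinh.measurable.comp (h1.const_mul _)).const_mul _))))

lemma integrableOn_Vext_Ioi : IntegrableOn Vext (Ioi (0:ℝ)) := by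
  refine ⟨measurable_Vext.aestronglyMeasurable, ?_⟩
  rw [HasFiniteIntegral]
  have hmem : ∀ᵐ s ∂(volume.restrict (Ioi (0:ℝ))), s ∈ Ioi (0:ℝ) :=
    ae_restrict_mem measurableSet_Ioi
  have step1 : ∫⁻ s in Ioi (0:ℝ), ‖Vext s‖ₑ = ∫⁻ s in Ioi (0:ℝ), ∑' n, ENNReal.ofReal (Gp n s) := by
    apply lintegral_congr_ae
    filter_upwards [hmem] with s hs
    have h1 := hasSum_Gp hs
    have hnn : 0 ≤ Vext s := by
      rw [← h1.tsum_eq]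
      exact tsum_nonneg fun n => Gp_nonneg n (le_of_lt hs)
    rw [Real.enorm_eq_ofReal hnn, ← h1.tsum_eq,
      ENNReal.ofReal_tsum_of_nonneg (fun n => Gp_nonneg n (le_of_lt hs)) h1.summable]
  rw [step1, lintegral_tsum (fun n => ((measurable_Gp n).ennreal_ofReal).aemeasurable)]
  have step2 : ∀ n : ℕ, ∫⁻ s in Ioi (0:ℝ), ENNReal.ofReal (Gp n s)
      = ENNReal.ofReal (1 / (Real.pi ^ 3 * ((n:ℝ) + 1) ^ 2)) := by
    intro n
    rw [← ofReal_integral_eq_lintegral_ofReal (integrableOn_Gp n)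
      (by filter_upwards [hmem] with s hs using Gp_nonneg n (le_of_lt hs)), integral_Gp]
  simp_rw [step2]
  rw [← ENNReal.ofReal_tsum_of_nonneg (fun n => by positivity) hasSum_coeff.summable]
  exact ENNReal.ofReal_lt_top

lemma integral_Vext_Ioi : ∫ s in Ioi (0:ℝ), Vext s = 1 / (6 * Real.pi) := by
  have hmem : ∀ᵐ s ∂(volume.restrict (Ioi (0:ℝ))), s ∈ Ioi (0:ℝ) :=
    ae_restrict_mem measurableSet_Ioi
  have hsum : Summable fun n : ℕ => ∫ s in Ioi (0:ℝ), ‖Gp n s‖ := by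
    have : (fun n : ℕ => ∫ s in Ioi (0:ℝ), ‖Gp n s‖)
        = fun n : ℕ => 1 / (Real.pi ^ 3 * ((n:ℝ) + 1) ^ 2) := by
      funext n
      rw [← integral_Gp n]
      apply integral_congr_ae
      filter_upwards [hmem] with s hs
      exact Real.norm_of_nonneg (Gp_nonneg n (le_of_lt hs))
    rw [this]
    exact hasSum_coeff.summable
  have h := hasSum_integral_of_summable_integral_norm
    (μ := volume.restrict (Ioi (0:ℝ))) (F := Gp) integrableOn_Gp hsum
  have h2 : ∫ s in Ioi (0:ℝ), (∑' n, Gp n s) = ∫ s in Ioi (0:ℝ), Vext s := by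
    apply integral_congr_ae
    filter_upwards [hmem] with s hs
    exact (hasSum_Gp hs).tsum_eq
  rw [h2] at h
  have h3 : (fun n : ℕ => ∫ s in Ioi (0:ℝ), Gp n s)
      = fun n : ℕ => 1 / (Real.pi ^ 3 * ((n:ℝ) + 1) ^ 2) := funext integral_Gp
  rw [h3] at h
  exact (h.unique hasSum_coeff)

lemma Vext_neg (x : ℝ) : Vext (-x) = Vext x := by simp [Vext]

lemma integrable_Vext : Integrable Vext := by
  have h1 : IntegrableOn Vext (Ioi (0:ℝ)) := integrableOn_Vext_Ioi
  have h2 : IntegrableOn Vext (Iic (0:ℝ)) := by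
    rw [← Measure.map_neg_eq_self (volume : Measure ℝ)]
    have A : MeasurableEmbedding fun x : ℝ => -x :=
      (Homeomorph.neg ℝ).measurableEmbedding
    rw [A.integrableOn_map_iff]
    simp only [Function.comp_def, Vext_neg, neg_preimage, neg_Iic, neg_zero]
    exact Iff.mpr integrableOn_Ici_iff_integrableOn_Ioi h1
  have := h2.union h1
  rwa [Iic_union_Ioi, integrableOn_univ] at this

lemma integral_Vext : ∫ x, Vext x = 1 / (3 * Real.pi) := by
  have habs : (fun x : ℝ => Vext |x|) = Vext := by
    funext x
    rcases le_or_gt 0 x with h | h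
    · rw [abs_of_nonneg h]
    · rw [abs_of_neg h, Vext_neg]
  calc ∫ x, Vext x = ∫ x, Vext |x| := by rw [habs]
    _ = 2 * ∫ x in Ioi (0:ℝ), Vext x := integral_comp_abs
    _ = 1 / (3 * Real.pi) := by
      rw [integral_Vext_Ioi]
      field_simp
      ring

/-- (Concentration of the rescaled kernel, transition to the intermediate regime.)
For every bounded continuous `f : ℝ → ℝ`,
`∫_ℝ a·V(ax)·f(x) dx → (1/(3π))·f(0)` as `a → +∞`; that is, the rescaled kernels
`a·V(a·)` converge to `(∫_{−∞}^∞ V)·δ₀ = (1/(3π))·δ₀`. -/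
theorem stmt17 (f : BoundedContinuousFunction ℝ ℝ) :
    Tendsto (fun a : ℝ => ∫ x : ℝ, a * Vext (a * x) * f x) atTop
      (nhds ((1 / (3 * Real.pi)) * f 0)) := by
  have hI := integrable_Vext
  have key : Tendsto (fun a : ℝ => ∫ y : ℝ, Vext y * f (a⁻¹ * y)) atTop
      (nhds ((1 / (3 * Real.pi)) * f 0)) := by
    have hlim : ∫ y : ℝ, Vext y * f 0 = (1 / (3 * Real.pi)) * f 0 := by
      rw [integral_mul_const, integral_Vext]
    rw [← hlim]
    apply tendsto_integral_filter_of_dominated_convergence (fun y => |Vext y| * ‖f‖)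
    · filter_upwards with a
      exact (measurable_Vext.aestronglyMeasurable).mul
        ((f.continuous.comp (continuous_const.mul continuous_id)).aestronglyMeasurable)
    · filter_upwards with a
      filter_upwards with y
      rw [Real.norm_eq_abs, abs_mul]
      exact mul_le_mul_of_nonneg_left (f.norm_coe_le_norm _) (abs_nonneg _)
    · exact hI.abs.mul_const _
    · filter_upwards with y
      have h0 : Tendsto (fun a : ℝ => a⁻¹ * y) atTop (nhds 0) := by
        simpa using tendsto_inv_atTop_zero.mul_const y
      exact tendsto_const_nhds.mul ((f.continuous.tendsto 0).comp h0)
  apply key.congr'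
  filter_upwards [eventually_gt_atTop (0:ℝ)] with a ha
  have h1 : (fun x : ℝ => a * Vext (a * x) * f x)
      = fun x => (fun y => a * (Vext y * f (a⁻¹ * y))) (a * x) := by
    funext x
    simp only [inv_mul_cancel_left₀ ha.ne']
    ring
  rw [h1, Measure.integral_comp_mul_left (fun y => a * (Vext y * f (a⁻¹ * y))) a,
    MeasureTheory.integral_const_mul, abs_of_pos (inv_pos.mpr ha), smul_eq_mul, ← mul_assoc,
    inv_mul_cancel₀ ha.ne', one_mul]
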